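/- The quantity Θ = (min_{c ∈ ℝ} F(c))/e² satisfies |Θ - 0.4549| < 5·10^{-5}; that is, the Gaussian density of the Wang–Zhu soliton equals 0.4549 to four decimal places. -/

import Mathlib

open MeasureTheory Real Set

/-- The closed pentagon with vertices (-1,-1), (1,-1), (1,0), (0,1), (-1,1). -/
def P : Set (ℝ × ℝ) :=
  {p : ℝ × ℝ | -1 ≤ p.1 ∧ p.1 ≤ 1 ∧ -1 ≤ p.2 ∧ p.2 ≤ 1 ∧ p.1 + p.2 ≤ 1}

/-- `F c = ∫_P e^{-c(x₁+x₂)} dx₁ dx₂` (Lebesgue measure on ℝ²). -/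
noncomputable def F (c : ℝ) : ℝ := ∫ p in P, Real.exp (-c * (p.1 + p.2))

def T' : Set (ℝ × ℝ) := {p : ℝ × ℝ | p.1 ∈ Icc (0:ℝ) 1 ∧ p.2 ∈ Ioc (1 - p.1) 1}

def S' : Set (ℝ × ℝ) := Icc (-1:ℝ) 1 ×ˢ Icc (-1:ℝ) 1

lemma hPclosed : IsClosed P := by
  have : P = (fun p : ℝ×ℝ => p.1) ⁻¹' Icc (-1) 1 ∩ (fun p : ℝ×ℝ => p.2) ⁻¹' Icc (-1) 1
      ∩ (fun p : ℝ×ℝ => p.1 + p.2) ⁻¹' Iic 1 := by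
    ext p; simp [P, Set.mem_Icc, Set.mem_Iic]; tauto
  rw [this]
  exact ((isClosed_Icc.preimage (by fun_prop)).inter (isClosed_Icc.preimage (by fun_prop))).inter
    (isClosed_Iic.preimage (by fun_prop))

lemma hPm : MeasurableSet P := hPclosed.measurableSet

lemma hTm : MeasurableSet T' := by
  have : T' = {p : ℝ×ℝ | 0 ≤ p.1} ∩ {p : ℝ×ℝ | p.1 ≤ 1} ∩ ({p : ℝ×ℝ | 1 - p.1 < p.2} ∩ {p : ℝ×ℝ | p.2 ≤ 1}) := by
    ext p; simp [T', and_assoc]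
  rw [this]
  refine (MeasurableSet.inter (MeasurableSet.inter ?_ ?_) (MeasurableSet.inter ?_ ?_))
  · exact measurableSet_le measurable_const measurable_fst
  · exact measurableSet_le measurable_fst measurable_const
  · exact measurableSet_lt (measurable_const.sub measurable_fst) measurable_snd
  · exact measurableSet_le measurable_snd measurable_const

lemma hunion : S' = P ∪ T' := by
  ext ⟨x, y⟩
  simp only [S', P, T', Set.mem_prod, Set.mem_Icc, Set.mem_Ioc, Set.mem_union, Set.mem_setOf_eq]
  constructor
  · rintro ⟨⟨h1, h2⟩, h3, h4⟩
    rcases le_or_gt (x + y) 1 with h | h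
    · exact Or.inl ⟨h1, h2, h3, h4, h⟩
    · exact Or.inr ⟨⟨by linarith, h2⟩, ⟨by linarith, h4⟩⟩
  · rintro (⟨h1, h2, h3, h4, h5⟩ | ⟨⟨h1, h2⟩, ⟨h3, h4⟩⟩)
    · exact ⟨⟨h1, h2⟩, h3, h4⟩
    · exact ⟨⟨by linarith, h2⟩, ⟨by linarith, h4⟩⟩

lemma hdisj : Disjoint P T' := by
  rw [Set.disjoint_left]
  rintro ⟨x, y⟩ ⟨_, _, _, _, h5⟩ ⟨⟨_, _⟩, ⟨h3, _⟩⟩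
  simp only at *
  linarith

lemma hIntS (c : ℝ) : IntegrableOn (fun p : ℝ×ℝ => Real.exp (-c * (p.1 + p.2))) S' := by
  apply ContinuousOn.integrableOn_compact
  · exact (isCompact_Icc.prod isCompact_Icc)
  · fun_prop

lemma hsubPS : P ⊆ S' := by rw [hunion]; exact Set.subset_union_left
lemma hsubTS : T' ⊆ S' := by rw [hunion]; exact Set.subset_union_right

lemma hIntP (c : ℝ) : IntegrableOn (fun p : ℝ×ℝ => Real.exp (-c * (p.1 + p.2))) P :=
  (hIntS c).mono_set hsubPS
lemma hIntT (c : ℝ) : IntegrableOn (fun p : ℝ×ℝ => Real.exp (-c * (p.1 + p.2))) T' :=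
  (hIntS c).mono_set hsubTS

lemma split (c : ℝ) :
    (∫ p in S', Real.exp (-c * (p.1 + p.2))) = F c + ∫ p in T', Real.exp (-c * (p.1 + p.2)) := by
  rw [F, ← setIntegral_union hdisj hTm (hIntP c) (hIntT c), ← hunion]

lemma int_exp (c a b : ℝ) (hc : c ≠ 0) :
    ∫ x in a..b, Real.exp (-c*x) = (Real.exp (-c*a) - Real.exp (-c*b))/c := by
  have h : ∀ x ∈ Set.uIcc a b, HasDerivAt (fun x => -(Real.exp (-c*x)/c)) (Real.exp (-c*x)) x := by
    intro x _
    have h1 : HasDerivAt (fun x : ℝ => -c*x) (-c) x := by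
      simpa using (hasDerivAt_id x).const_mul (-c)
    have h2 := (Real.hasDerivAt_exp (-c*x)).comp x h1
    have h3 := (h2.div_const c).neg
    convert h3 using 1
    all_goals first | rfl | field_simp
  rw [intervalIntegral.integral_eq_sub_of_hasDerivAt h
    ((Continuous.intervalIntegrable (by continuity) a b))]
  ring

lemma icc_exp (c : ℝ) (hc : c ≠ 0) :
    ∫ x in Icc (-1:ℝ) 1, Real.exp (-c*x) = (Real.exp c - Real.exp (-c))/c := by
  rw [MeasureTheory.integral_Icc_eq_integral_Ioc,
    ← intervalIntegral.integral_of_le (by norm_num : (-1:ℝ) ≤ 1), int_exp c _ _ hc]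
  ring_nf

lemma intS (c : ℝ) (hc : c ≠ 0) :
    (∫ p in S', Real.exp (-c * (p.1 + p.2))) = ((Real.exp c - Real.exp (-c))/c)^2 := by
  have h1 : ∀ p : ℝ×ℝ, Real.exp (-c * (p.1 + p.2)) = Real.exp (-c*p.1) * Real.exp (-c*p.2) := by
    intro p; rw [← Real.exp_add]; ring_nf
  simp_rw [h1]
  rw [S', Measure.volume_eq_prod,
    setIntegral_prod_mul (fun x => Real.exp (-c*x)) (fun y => Real.exp (-c*y)), icc_exp c hc, sq]

lemma inner_int (c : ℝ) (hc : c ≠ 0) (x : ℝ) :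
    (∫ y, T'.indicator (fun p : ℝ×ℝ => Real.exp (-c * (p.1 + p.2))) (x, y))
      = (Icc (0:ℝ) 1).indicator
          (fun x => Real.exp (-c*x) * ((Real.exp (-c*(1-x)) - Real.exp (-c))/c)) x := by
  by_cases hx : x ∈ Icc (0:ℝ) 1
  · have h1 : (fun y => T'.indicator (fun p : ℝ×ℝ => Real.exp (-c * (p.1 + p.2))) (x, y))
        = (Ioc (1-x) 1).indicator (fun y => Real.exp (-c*(x+y))) := by
      funext y
      by_cases hy : y ∈ Ioc (1-x) 1
      · rw [Set.indicator_of_mem hy, Set.indicator_of_mem (by exact ⟨hx, hy⟩ : (x,y) ∈ T')]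
      · rw [Set.indicator_of_notMem hy, Set.indicator_of_notMem (by
          intro hmem; exact hy hmem.2)]
    rw [h1, Set.indicator_of_mem hx, integral_indicator measurableSet_Ioc,
      ← intervalIntegral.integral_of_le (by linarith [hx.1] : 1 - x ≤ 1)]
    have h2 : ∀ y : ℝ, Real.exp (-c*(x+y)) = Real.exp (-c*x) * Real.exp (-c*y) := by
      intro y; rw [← Real.exp_add]; ring_nf
    simp_rw [h2]
    rw [intervalIntegral.integral_const_mul, int_exp c _ _ hc]
    norm_num
  · rw [Set.indicator_of_notMem hx]
    have h1 : (fun y => T'.indicator (fun p : ℝ×ℝ => Real.exp (-c * (p.1 + p.2))) (x, y))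
        = fun _ => (0:ℝ) := by
      funext y
      refine Set.indicator_of_notMem ?_ _
      intro hmem; exact hx hmem.1
    rw [h1, integral_zero]

lemma icc01_exp (c : ℝ) (hc : c ≠ 0) :
    ∫ x in Icc (0:ℝ) 1, Real.exp (-c*x) = (1 - Real.exp (-c))/c := by
  rw [MeasureTheory.integral_Icc_eq_integral_Ioc,
    ← intervalIntegral.integral_of_le (by norm_num : (0:ℝ) ≤ 1), int_exp c _ _ hc]
  norm_num

lemma intT (c : ℝ) (hc : c ≠ 0) :
    (∫ p in T', Real.exp (-c * (p.1 + p.2)))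
      = Real.exp (-c)/c - Real.exp (-c)*(1 - Real.exp (-c))/c^2 := by
  have hInd : Integrable (T'.indicator fun p : ℝ×ℝ => Real.exp (-c*(p.1+p.2))) volume :=
    (integrable_indicator_iff hTm).2 (hIntT c)
  rw [← integral_indicator hTm]
  rw [Measure.volume_eq_prod] at hInd ⊢
  rw [MeasureTheory.integral_prod _ hInd]
  simp_rw [inner_int c hc]
  rw [integral_indicator measurableSet_Icc]
  have h3 : ∀ x ∈ Icc (0:ℝ) 1, Real.exp (-c*x) * ((Real.exp (-c*(1-x)) - Real.exp (-c))/c)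
      = (Real.exp (-c) - Real.exp (-c) * Real.exp (-c*x))/c := by
    intro x _
    have e1 : Real.exp (-c*x) * Real.exp (-c*(1-x)) = Real.exp (-c) := by
      rw [← Real.exp_add]; ring_nf
    have e2 : Real.exp (-c*x) * ((Real.exp (-c*(1-x)) - Real.exp (-c))/c)
        = (Real.exp (-c*x) * Real.exp (-c*(1-x)) - Real.exp (-c*x) * Real.exp (-c))/c := by
      ring
    rw [e2, e1]; ring
  rw [setIntegral_congr_fun measurableSet_Icc h3]
  have h4 : IntegrableOn (fun x => Real.exp (-c*x)) (Icc (0:ℝ) 1) := by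
    apply ContinuousOn.integrableOn_compact isCompact_Icc; fun_prop
  have h5 : ∀ x : ℝ, (Real.exp (-c) - Real.exp (-c) * Real.exp (-c*x))/c
      = Real.exp (-c)/c - (Real.exp (-c)/c) * Real.exp (-c*x) := by intro x; ring
  simp_rw [h5]
  rw [MeasureTheory.integral_sub (ContinuousOn.integrableOn_compact isCompact_Icc (by fun_prop))
    (h4.const_mul _), MeasureTheory.setIntegral_const,
    MeasureTheory.integral_const_mul, icc01_exp c hc]
  rw [Real.volume_real_Icc]
  norm_num
  ring

lemma F_eq (c : ℝ) (hc : c ≠ 0) :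
    F c = (((Real.exp c)^2 - 1)^2 + Real.exp c - 1 - c * Real.exp c)
      / (c^2 * (Real.exp c)^2) := by
  have h := split c
  rw [intS c hc, intT c hc] at h
  have hF : F c = ((Real.exp c - Real.exp (-c))/c)^2
      - (Real.exp (-c)/c - Real.exp (-c)*(1 - Real.exp (-c))/c^2) := by linarith
  rw [hF, Real.exp_neg]
  have hE := Real.exp_pos c
  field_simp
  ring

lemma F_convex : ConvexOn ℝ Set.univ F := by
  refine ⟨convex_univ, fun a _ b _ s t hs ht hst => ?_⟩
  simp only [smul_eq_mul, F]
  have key : ∀ p ∈ P, Real.exp (-(s*a + t*b) * (p.1 + p.2))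
      ≤ s * Real.exp (-a*(p.1+p.2)) + t * Real.exp (-b*(p.1+p.2)) := by
    intro p _
    have h := convexOn_exp.2 (Set.mem_univ (-a*(p.1+p.2))) (Set.mem_univ (-b*(p.1+p.2))) hs ht hst
    simp only [smul_eq_mul] at h
    have e : -(s*a + t*b) * (p.1+p.2) = s * (-a*(p.1+p.2)) + t * (-b*(p.1+p.2)) := by ring
    rw [e]
    exact h
  have step := setIntegral_mono_on (hIntP (s*a + t*b))
    (((hIntP a).const_mul s).add ((hIntP b).const_mul t)) hPm key
  have eq2 : (∫ p in P, (s * Real.exp (-a*(p.1+p.2)) + t * Real.exp (-b*(p.1+p.2))))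
      = s * (∫ p in P, Real.exp (-a*(p.1+p.2))) + t * ∫ p in P, Real.exp (-b*(p.1+p.2)) := by
    rw [MeasureTheory.integral_add ((hIntP a).const_mul s) ((hIntP b).const_mul t),
      MeasureTheory.integral_const_mul, MeasureTheory.integral_const_mul]
  exact le_trans step (le_of_eq eq2)

lemma cell_bound {f : ℝ → ℝ} (hf : ConvexOn ℝ Set.univ f) {t u v x flo fhi' L : ℝ}
    (htu : t < u) (hux : u ≤ x) (hxv : x ≤ v)
    (hflo : flo ≤ f u) (hfhi : f t ≤ fhi')
    (hL1 : L ≤ flo) (hL2 : L ≤ flo + (flo - fhi')/(u - t) * (v - u)) : L ≤ f x := by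
  rcases eq_or_lt_of_le hux with rfl | hux'
  · linarith
  · have hs := hf.slope_mono_adjacent (Set.mem_univ t) (Set.mem_univ x) htu hux'
    have hut : (0:ℝ) < u - t := by linarith
    have hxu : (0:ℝ) < x - u := by linarith
    have h1 : (flo - fhi')/(u-t) ≤ (f u - f t)/(u-t) := by
      exact div_le_div_of_nonneg_right (by linarith) hut.le
    set s' := (flo - fhi')/(u-t) with hs'
    have h2 : s' ≤ (f x - f u)/(x-u) := le_trans h1 hs
    have h3 : s' * (x - u) ≤ f x - f u := (le_div_iff₀ hxu).1 h2
    rcases le_or_gt s' 0 with hneg | hpos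
    · have h4 : s' * (v - u) ≤ s' * (x - u) :=
        mul_le_mul_of_nonpos_left (by linarith) hneg
      linarith
    · nlinarith

lemma left_bookend {f : ℝ → ℝ} (hf : ConvexOn ℝ Set.univ f) {u v c : ℝ}
    (huv : u < v) (hfv : f v ≤ f u) (hc : c ≤ u) : f u ≤ f c := by
  rcases eq_or_lt_of_le hc with rfl | hlt
  · exact le_refl _
  · have hs := hf.slope_mono_adjacent (Set.mem_univ c) (Set.mem_univ v) hlt huv
    have h2 : (f v - f u)/(v-u) ≤ 0 :=
      div_nonpos_of_nonpos_of_nonneg (by linarith) (by linarith)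
    have h3 : (f u - f c)/(u-c) ≤ 0 := le_trans hs h2
    rcases div_nonpos_iff.mp h3 with ⟨ha, hb⟩ | ⟨ha, hb⟩
    · linarith
    · linarith

lemma right_bookend {f : ℝ → ℝ} (hf : ConvexOn ℝ Set.univ f) {u v c : ℝ}
    (huv : u < v) (hfv : f u ≤ f v) (hc : v ≤ c) : f v ≤ f c := by
  rcases eq_or_lt_of_le hc with rfl | hlt
  · exact le_refl _
  · have hs := hf.slope_mono_adjacent (Set.mem_univ u) (Set.mem_univ c) huv hlt
    have h2 : (0:ℝ) ≤ (f v - f u)/(v-u) :=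
      div_nonneg (by linarith) (by linarith)
    have h3 : (0:ℝ) ≤ (f c - f v)/(c-v) := le_trans h2 hs
    rcases div_nonneg_iff.mp h3 with ⟨ha, hb⟩ | ⟨ha, hb⟩
    · linarith
    · nlinarith

lemma exp_lo_hi {x S B lo hi : ℝ} (h : |Real.exp x - S| ≤ B) (h1 : lo < S - B) (h2 : S + B < hi) :
    lo < Real.exp x ∧ Real.exp x < hi := by
  rw [abs_le] at h; exact ⟨by linarith [h.1], by linarith [h.2]⟩

lemma F_interval {q elo ehi flo fhi : ℝ} (hq0 : q ≠ 0)
    (h1 : elo < Real.exp q) (h2 : Real.exp q < ehi)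
    (hlo : ∀ E : ℝ, elo ≤ E → E ≤ ehi → flo * (q^2 * E^2) < (E^2-1)^2 + E - 1 - q*E)
    (hhi : ∀ E : ℝ, elo ≤ E → E ≤ ehi → (E^2-1)^2 + E - 1 - q*E < fhi * (q^2*E^2)) :
    flo < F q ∧ F q < fhi := by
  have hE := Real.exp_pos q
  rw [F_eq q hq0]
  have hD : 0 < q^2 * (Real.exp q)^2 := by positivity
  exact ⟨(lt_div_iff₀ hD).2 (hlo _ h1.le h2.le), (div_lt_iff₀ hD).2 (hhi _ h1.le h2.le)⟩

lemma F_contOn : ContinuousOn F (Icc (-1/2 : ℝ) (-7/20)) := by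
  have hG : ContinuousOn (fun c : ℝ => (((Real.exp c)^2 - 1)^2 + Real.exp c - 1 - c * Real.exp c)
      / (c^2 * (Real.exp c)^2)) (Icc (-1/2 : ℝ) (-7/20)) := by
    apply ContinuousOn.div (by fun_prop) (by fun_prop)
    intro x hx
    have hx2 : x ≤ -7/20 := hx.2
    have hx0 : x ≠ 0 := by intro h; rw [h] at hx2; norm_num at hx2
    have := Real.exp_pos x
    positivity
  exact hG.congr (fun x hx => F_eq x (by
    intro h; rw [h] at hx; exact absurd hx.2 (by norm_num)))

lemma E0 : (1486301367879/2500000000000 : ℝ) < Real.exp (-13/25) ∧ Real.exp (-13/25) < (5945205480281/10000000000000 : ℝ) := by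
  refine exp_lo_hi (Real.exp_bound (x := -13/25)
      (by rw [abs_le]; constructor <;> norm_num) (n := 10) (by norm_num)) ?_ ?_ <;>
    rw [show |(-13/25 : ℝ)| = 13/25 by rw [abs_of_nonpos (by norm_num)]; norm_num] <;>
    norm_num [Finset.sum_range_succ, Nat.factorial]

lemma Fb0 : (33658901533/10000000000 : ℝ) < F (-13/25) ∧ F (-13/25) < (2103681407/625000000 : ℝ) :=
  F_interval (by norm_num) E0.1 E0.2
    (fun E hE1 hE2 => by nlinarith [sq_nonneg (E - (1486301367879/2500000000000 : ℝ)), sq_nonneg ((5945205480281/10000000000000 : ℝ) - E), mul_nonneg (sub_nonneg.2 hE1) (sub_nonneg.2 hE2)])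
    (fun E hE1 hE2 => by nlinarith [sq_nonneg (E - (1486301367879/2500000000000 : ℝ)), sq_nonneg ((5945205480281/10000000000000 : ℝ) - E), mul_nonneg (sub_nonneg.2 hE1) (sub_nonneg.2 hE2)])

lemma E1 : (758163323949/1250000000000 : ℝ) < Real.exp (-1/2) ∧ Real.exp (-1/2) < (6065306597513/10000000000000 : ℝ) := by
  refine exp_lo_hi (Real.exp_bound (x := -1/2)
      (by rw [abs_le]; constructor <;> norm_num) (n := 10) (by norm_num)) ?_ ?_ <;>
    rw [show |(-1/2 : ℝ)| = 1/2 by rw [abs_of_nonpos (by norm_num)]; norm_num] <;>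
    norm_num [Finset.sum_range_succ, Nat.factorial]

lemma Fb1 : (8409613397/2500000000 : ℝ) < F (-1/2) ∧ F (-1/2) < (33638454249/10000000000 : ℝ) :=
  F_interval (by norm_num) E1.1 E1.2
    (fun E hE1 hE2 => by nlinarith [sq_nonneg (E - (758163323949/1250000000000 : ℝ)), sq_nonneg ((6065306597513/10000000000000 : ℝ) - E), mul_nonneg (sub_nonneg.2 hE1) (sub_nonneg.2 hE2)])
    (fun E hE1 hE2 => by nlinarith [sq_nonneg (E - (758163323949/1250000000000 : ℝ)), sq_nonneg ((6065306597513/10000000000000 : ℝ) - E), mul_nonneg (sub_nonneg.2 hE1) (sub_nonneg.2 hE2)])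

lemma E2 : (3080757202633/5000000000000 : ℝ) < Real.exp (-38741/80000) ∧ Real.exp (-38741/80000) < (6161514409567/10000000000000 : ℝ) := by
  refine exp_lo_hi (Real.exp_bound (x := -38741/80000)
      (by rw [abs_le]; constructor <;> norm_num) (n := 10) (by norm_num)) ?_ ?_ <;>
    rw [show |(-38741/80000 : ℝ)| = 38741/80000 by rw [abs_of_nonpos (by norm_num)]; norm_num] <;>
    norm_num [Finset.sum_range_succ, Nat.factorial]

lemma Fb2 : (16813075067/5000000000 : ℝ) < F (-38741/80000) ∧ F (-38741/80000) < (16813075307/5000000000 : ℝ) :=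
  F_interval (by norm_num) E2.1 E2.2
    (fun E hE1 hE2 => by nlinarith [sq_nonneg (E - (3080757202633/5000000000000 : ℝ)), sq_nonneg ((6161514409567/10000000000000 : ℝ) - E), mul_nonneg (sub_nonneg.2 hE1) (sub_nonneg.2 hE2)])
    (fun E hE1 hE2 => by nlinarith [sq_nonneg (E - (3080757202633/5000000000000 : ℝ)), sq_nonneg ((6161514409567/10000000000000 : ℝ) - E), mul_nonneg (sub_nonneg.2 hE1) (sub_nonneg.2 hE2)])

lemma E3 : (781975828193/1250000000000 : ℝ) < Real.exp (-18763/40000) ∧ Real.exp (-18763/40000) < (97746978573/156250000000 : ℝ) := by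
  refine exp_lo_hi (Real.exp_bound (x := -18763/40000)
      (by rw [abs_le]; constructor <;> norm_num) (n := 10) (by norm_num)) ?_ ?_ <;>
    rw [show |(-18763/40000 : ℝ)| = 18763/40000 by rw [abs_of_nonpos (by norm_num)]; norm_num] <;>
    norm_num [Finset.sum_range_succ, Nat.factorial]

lemma Fb3 : (16808727367/5000000000 : ℝ) < F (-18763/40000) ∧ F (-18763/40000) < (8404363771/2500000000 : ℝ) :=
  F_interval (by norm_num) E3.1 E3.2
    (fun E hE1 hE2 => by nlinarith [sq_nonneg (E - (781975828193/1250000000000 : ℝ)), sq_nonneg ((97746978573/156250000000 : ℝ) - E), mul_nonneg (sub_nonneg.2 hE1) (sub_nonneg.2 hE2)])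
    (fun E hE1 hE2 => by nlinarith [sq_nonneg (E - (781975828193/1250000000000 : ℝ)), sq_nonneg ((97746978573/156250000000 : ℝ) - E), mul_nonneg (sub_nonneg.2 hE1) (sub_nonneg.2 hE2)])

lemma E4 : (3159734206081/5000000000000 : ℝ) < Real.exp (-9179/20000) ∧ Real.exp (-9179/20000) < (6319468414677/10000000000000 : ℝ) := by
  refine exp_lo_hi (Real.exp_bound (x := -9179/20000)
      (by rw [abs_le]; constructor <;> norm_num) (n := 10) (by norm_num)) ?_ ?_ <;>
    rw [show |(-9179/20000 : ℝ)| = 9179/20000 by rw [abs_of_nonpos (by norm_num)]; norm_num] <;>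
    norm_num [Finset.sum_range_succ, Nat.factorial]

lemma Fb4 : (6722679879/2000000000 : ℝ) < F (-9179/20000) ∧ F (-9179/20000) < (8403349919/2500000000 : ℝ) :=
  F_interval (by norm_num) E4.1 E4.2
    (fun E hE1 hE2 => by nlinarith [sq_nonneg (E - (3159734206081/5000000000000 : ℝ)), sq_nonneg ((6319468414677/10000000000000 : ℝ) - E), mul_nonneg (sub_nonneg.2 hE1) (sub_nonneg.2 hE2)])
    (fun E hE1 hE2 => by nlinarith [sq_nonneg (E - (3159734206081/5000000000000 : ℝ)), sq_nonneg ((6319468414677/10000000000000 : ℝ) - E), mul_nonneg (sub_nonneg.2 hE1) (sub_nonneg.2 hE2)])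

lemma E5 : (6362269114143/10000000000000 : ℝ) < Real.exp (-2261/5000) ∧ Real.exp (-2261/5000) < (795283639539/1250000000000 : ℝ) := by
  refine exp_lo_hi (Real.exp_bound (x := -2261/5000)
      (by rw [abs_le]; constructor <;> norm_num) (n := 10) (by norm_num)) ?_ ?_ <;>
    rw [show |(-2261/5000 : ℝ)| = 2261/5000 by rw [abs_of_nonpos (by norm_num)]; norm_num] <;>
    norm_num [Finset.sum_range_succ, Nat.factorial]

lemma Fb5 : (33611472551/10000000000 : ℝ) < F (-2261/5000) ∧ F (-2261/5000) < (16805736397/5000000000 : ℝ) :=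
  F_interval (by norm_num) E5.1 E5.2
    (fun E hE1 hE2 => by nlinarith [sq_nonneg (E - (6362269114143/10000000000000 : ℝ)), sq_nonneg ((795283639539/1250000000000 : ℝ) - E), mul_nonneg (sub_nonneg.2 hE1) (sub_nonneg.2 hE2)])
    (fun E hE1 hE2 => by nlinarith [sq_nonneg (E - (6362269114143/10000000000000 : ℝ)), sq_nonneg ((795283639539/1250000000000 : ℝ) - E), mul_nonneg (sub_nonneg.2 hE1) (sub_nonneg.2 hE2)])

lemma E6 : (639096384007/1000000000000 : ℝ) < Real.exp (-4477/10000) ∧ Real.exp (-4477/10000) < (399435240127/625000000000 : ℝ) := by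
  refine exp_lo_hi (Real.exp_bound (x := -4477/10000)
      (by rw [abs_le]; constructor <;> norm_num) (n := 10) (by norm_num)) ?_ ?_ <;>
    rw [show |(-4477/10000 : ℝ)| = 4477/10000 by rw [abs_of_nonpos (by norm_num)]; norm_num] <;>
    norm_num [Finset.sum_range_succ, Nat.factorial]

lemma Fb6 : (8402633503/2500000000 : ℝ) < F (-4477/10000) ∧ F (-4477/10000) < (33610534231/10000000000 : ℝ) :=
  F_interval (by norm_num) E6.1 E6.2
    (fun E hE1 hE2 => by nlinarith [sq_nonneg (E - (639096384007/1000000000000 : ℝ)), sq_nonneg ((399435240127/625000000000 : ℝ) - E), mul_nonneg (sub_nonneg.2 hE1) (sub_nonneg.2 hE2)])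
    (fun E hE1 hE2 => by nlinarith [sq_nonneg (E - (639096384007/1000000000000 : ℝ)), sq_nonneg ((399435240127/625000000000 : ℝ) - E), mul_nonneg (sub_nonneg.2 hE1) (sub_nonneg.2 hE2)])

lemma E7 : (6410165519833/10000000000000 : ℝ) < Real.exp (-4447/10000) ∧ Real.exp (-4447/10000) < (6410165521667/10000000000000 : ℝ) := by
  refine exp_lo_hi (Real.exp_bound (x := -4447/10000)
      (by rw [abs_le]; constructor <;> norm_num) (n := 10) (by norm_num)) ?_ ?_ <;>
    rw [show |(-4447/10000 : ℝ)| = 4447/10000 by rw [abs_of_nonpos (by norm_num)]; norm_num] <;>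
    norm_num [Finset.sum_range_succ, Nat.factorial]

lemma Fb7 : (16805031177/5000000000 : ℝ) < F (-4447/10000) ∧ F (-4447/10000) < (33610062559/10000000000 : ℝ) :=
  F_interval (by norm_num) E7.1 E7.2
    (fun E hE1 hE2 => by nlinarith [sq_nonneg (E - (6410165519833/10000000000000 : ℝ)), sq_nonneg ((6410165521667/10000000000000 : ℝ) - E), mul_nonneg (sub_nonneg.2 hE1) (sub_nonneg.2 hE2)])
    (fun E hE1 hE2 => by nlinarith [sq_nonneg (E - (6410165519833/10000000000000 : ℝ)), sq_nonneg ((6410165521667/10000000000000 : ℝ) - E), mul_nonneg (sub_nonneg.2 hE1) (sub_nonneg.2 hE2)])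

lemma E8 : (3211499339917/5000000000000 : ℝ) < Real.exp (-4427/10000) ∧ Real.exp (-4427/10000) < (6422998681587/10000000000000 : ℝ) := by
  refine exp_lo_hi (Real.exp_bound (x := -4427/10000)
      (by rw [abs_le]; constructor <;> norm_num) (n := 10) (by norm_num)) ?_ ?_ <;>
    rw [show |(-4427/10000 : ℝ)| = 4427/10000 by rw [abs_of_nonpos (by norm_num)]; norm_num] <;>
    norm_num [Finset.sum_range_succ, Nat.factorial]

lemma Fb8 : (33609816449/10000000000 : ℝ) < F (-4427/10000) ∧ F (-4427/10000) < (6721963329/2000000000 : ℝ) :=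
  F_interval (by norm_num) E8.1 E8.2
    (fun E hE1 hE2 => by nlinarith [sq_nonneg (E - (3211499339917/5000000000000 : ℝ)), sq_nonneg ((6422998681587/10000000000000 : ℝ) - E), mul_nonneg (sub_nonneg.2 hE1) (sub_nonneg.2 hE2)])
    (fun E hE1 hE2 => by nlinarith [sq_nonneg (E - (3211499339917/5000000000000 : ℝ)), sq_nonneg ((6422998681587/10000000000000 : ℝ) - E), mul_nonneg (sub_nonneg.2 hE1) (sub_nonneg.2 hE2)])

lemma E9 : (1287171506367/2000000000000 : ℝ) < Real.exp (-4407/10000) ∧ Real.exp (-4407/10000) < (6435857533511/10000000000000 : ℝ) := by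
  refine exp_lo_hi (Real.exp_bound (x := -4407/10000)
      (by rw [abs_le]; constructor <;> norm_num) (n := 10) (by norm_num)) ?_ ?_ <;>
    rw [show |(-4407/10000 : ℝ)| = 4407/10000 by rw [abs_of_nonpos (by norm_num)]; norm_num] <;>
    norm_num [Finset.sum_range_succ, Nat.factorial]

lemma Fb9 : (4201203177/1250000000 : ℝ) < F (-4407/10000) ∧ F (-4407/10000) < (33609625603/10000000000 : ℝ) :=
  F_interval (by norm_num) E9.1 E9.2
    (fun E hE1 hE2 => by nlinarith [sq_nonneg (E - (1287171506367/2000000000000 : ℝ)), sq_nonneg ((6435857533511/10000000000000 : ℝ) - E), mul_nonneg (sub_nonneg.2 hE1) (sub_nonneg.2 hE2)])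
    (fun E hE1 hE2 => by nlinarith [sq_nonneg (E - (1287171506367/2000000000000 : ℝ)), sq_nonneg ((6435857533511/10000000000000 : ℝ) - E), mul_nonneg (sub_nonneg.2 hE1) (sub_nonneg.2 hE2)])

lemma E10 : (806092765909/1250000000000 : ℝ) < Real.exp (-4387/10000) ∧ Real.exp (-4387/10000) < (3224371064437/5000000000000 : ℝ) := by
  refine exp_lo_hi (Real.exp_bound (x := -4387/10000)
      (by rw [abs_le]; constructor <;> norm_num) (n := 10) (by norm_num)) ?_ ?_ <;>
    rw [show |(-4387/10000 : ℝ)| = 4387/10000 by rw [abs_of_nonpos (by norm_num)]; norm_num] <;>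
    norm_num [Finset.sum_range_succ, Nat.factorial]

lemma Fb10 : (33609489291/10000000000 : ℝ) < F (-4387/10000) ∧ F (-4387/10000) < (3360948947/1000000000 : ℝ) :=
  F_interval (by norm_num) E10.1 E10.2
    (fun E hE1 hE2 => by nlinarith [sq_nonneg (E - (806092765909/1250000000000 : ℝ)), sq_nonneg ((3224371064437/5000000000000 : ℝ) - E), mul_nonneg (sub_nonneg.2 hE1) (sub_nonneg.2 hE2)])
    (fun E hE1 hE2 => by nlinarith [sq_nonneg (E - (806092765909/1250000000000 : ℝ)), sq_nonneg ((3224371064437/5000000000000 : ℝ) - E), mul_nonneg (sub_nonneg.2 hE1) (sub_nonneg.2 hE2)])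

lemma E11 : (6461652517683/10000000000000 : ℝ) < Real.exp (-4367/10000) ∧ Real.exp (-4367/10000) < (6461652519213/10000000000000 : ℝ) := by
  refine exp_lo_hi (Real.exp_bound (x := -4367/10000)
      (by rw [abs_le]; constructor <;> norm_num) (n := 10) (by norm_num)) ?_ ?_ <;>
    rw [show |(-4367/10000 : ℝ)| = 4367/10000 by rw [abs_of_nonpos (by norm_num)]; norm_num] <;>
    norm_num [Finset.sum_range_succ, Nat.factorial]

lemma Fb11 : (16804704057/5000000000 : ℝ) < F (-4367/10000) ∧ F (-4367/10000) < (6721881657/2000000000 : ℝ) :=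
  F_interval (by norm_num) E11.1 E11.2
    (fun E hE1 hE2 => by nlinarith [sq_nonneg (E - (6461652517683/10000000000000 : ℝ)), sq_nonneg ((6461652519213/10000000000000 : ℝ) - E), mul_nonneg (sub_nonneg.2 hE1) (sub_nonneg.2 hE2)])
    (fun E hE1 hE2 => by nlinarith [sq_nonneg (E - (6461652517683/10000000000000 : ℝ)), sq_nonneg ((6461652519213/10000000000000 : ℝ) - E), mul_nonneg (sub_nonneg.2 hE1) (sub_nonneg.2 hE2)])

lemma E12 : (647458875471/1000000000000 : ℝ) < Real.exp (-4347/10000) ∧ Real.exp (-4347/10000) < (1618647189043/2500000000000 : ℝ) := by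
  refine exp_lo_hi (Real.exp_bound (x := -4347/10000)
      (by rw [abs_le]; constructor <;> norm_num) (n := 10) (by norm_num)) ?_ ?_ <;>
    rw [show |(-4347/10000 : ℝ)| = 4347/10000 by rw [abs_of_nonpos (by norm_num)]; norm_num] <;>
    norm_num [Finset.sum_range_succ, Nat.factorial]

lemma Fb12 : (33609381923/10000000000 : ℝ) < F (-4347/10000) ∧ F (-4347/10000) < (33609382087/10000000000 : ℝ) :=
  F_interval (by norm_num) E12.1 E12.2
    (fun E hE1 hE2 => by nlinarith [sq_nonneg (E - (647458875471/1000000000000 : ℝ)), sq_nonneg ((1618647189043/2500000000000 : ℝ) - E), mul_nonneg (sub_nonneg.2 hE1) (sub_nonneg.2 hE2)])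
    (fun E hE1 hE2 => by nlinarith [sq_nonneg (E - (647458875471/1000000000000 : ℝ)), sq_nonneg ((1618647189043/2500000000000 : ℝ) - E), mul_nonneg (sub_nonneg.2 hE1) (sub_nonneg.2 hE2)])

lemma E13 : (6487550890099/10000000000000 : ℝ) < Real.exp (-4327/10000) ∧ Real.exp (-4327/10000) < (1297510178299/2000000000000 : ℝ) := by
  refine exp_lo_hi (Real.exp_bound (x := -4327/10000)
      (by rw [abs_le]; constructor <;> norm_num) (n := 10) (by norm_num)) ?_ ?_ <;>
    rw [show |(-4327/10000 : ℝ)| = 4327/10000 by rw [abs_of_nonpos (by norm_num)]; norm_num] <;>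
    norm_num [Finset.sum_range_succ, Nat.factorial]

lemma Fb13 : (33609410757/10000000000 : ℝ) < F (-4327/10000) ∧ F (-4327/10000) < (33609410913/10000000000 : ℝ) :=
  F_interval (by norm_num) E13.1 E13.2
    (fun E hE1 hE2 => by nlinarith [sq_nonneg (E - (6487550890099/10000000000000 : ℝ)), sq_nonneg ((1297510178299/2000000000000 : ℝ) - E), mul_nonneg (sub_nonneg.2 hE1) (sub_nonneg.2 hE2)])
    (fun E hE1 hE2 => by nlinarith [sq_nonneg (E - (6487550890099/10000000000000 : ℝ)), sq_nonneg ((1297510178299/2000000000000 : ℝ) - E), mul_nonneg (sub_nonneg.2 hE1) (sub_nonneg.2 hE2)])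

lemma E14 : (6500538975697/10000000000000 : ℝ) < Real.exp (-4307/10000) ∧ Real.exp (-4307/10000) < (6500538977029/10000000000000 : ℝ) := by
  refine exp_lo_hi (Real.exp_bound (x := -4307/10000)
      (by rw [abs_le]; constructor <;> norm_num) (n := 10) (by norm_num)) ?_ ?_ <;>
    rw [show |(-4307/10000 : ℝ)| = 4307/10000 by rw [abs_of_nonpos (by norm_num)]; norm_num] <;>
    norm_num [Finset.sum_range_succ, Nat.factorial]

lemma Fb14 : (16804747327/5000000000 : ℝ) < F (-4307/10000) ∧ F (-4307/10000) < (33609494803/10000000000 : ℝ) :=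
  F_interval (by norm_num) E14.1 E14.2
    (fun E hE1 hE2 => by nlinarith [sq_nonneg (E - (6500538975697/10000000000000 : ℝ)), sq_nonneg ((6500538977029/10000000000000 : ℝ) - E), mul_nonneg (sub_nonneg.2 hE1) (sub_nonneg.2 hE2)])
    (fun E hE1 hE2 => by nlinarith [sq_nonneg (E - (6500538975697/10000000000000 : ℝ)), sq_nonneg ((6500538977029/10000000000000 : ℝ) - E), mul_nonneg (sub_nonneg.2 hE1) (sub_nonneg.2 hE2)])

lemma E15 : (6513553063457/10000000000000 : ℝ) < Real.exp (-4287/10000) ∧ Real.exp (-4287/10000) < (6513553064729/10000000000000 : ℝ) := by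
  refine exp_lo_hi (Real.exp_bound (x := -4287/10000)
      (by rw [abs_le]; constructor <;> norm_num) (n := 10) (by norm_num)) ?_ ?_ <;>
    rw [show |(-4287/10000 : ℝ)| = 4287/10000 by rw [abs_of_nonpos (by norm_num)]; norm_num] <;>
    norm_num [Finset.sum_range_succ, Nat.factorial]

lemma Fb15 : (16804816827/5000000000 : ℝ) < F (-4287/10000) ∧ F (-4287/10000) < (8402408449/2500000000 : ℝ) :=
  F_interval (by norm_num) E15.1 E15.2
    (fun E hE1 hE2 => by nlinarith [sq_nonneg (E - (6513553063457/10000000000000 : ℝ)), sq_nonneg ((6513553064729/10000000000000 : ℝ) - E), mul_nonneg (sub_nonneg.2 hE1) (sub_nonneg.2 hE2)])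
    (fun E hE1 hE2 => by nlinarith [sq_nonneg (E - (6513553063457/10000000000000 : ℝ)), sq_nonneg ((6513553064729/10000000000000 : ℝ) - E), mul_nonneg (sub_nonneg.2 hE1) (sub_nonneg.2 hE2)])

lemma E16 : (1631648301359/2500000000000 : ℝ) < Real.exp (-4267/10000) ∧ Real.exp (-4267/10000) < (130531864133/200000000000 : ℝ) := by
  refine exp_lo_hi (Real.exp_bound (x := -4267/10000)
      (by rw [abs_le]; constructor <;> norm_num) (n := 10) (by norm_num)) ?_ ?_ <;>
    rw [show |(-4267/10000 : ℝ)| = 4267/10000 by rw [abs_of_nonpos (by norm_num)]; norm_num] <;>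
    norm_num [Finset.sum_range_succ, Nat.factorial]

lemma Fb16 : (8402456949/2500000000 : ℝ) < F (-4267/10000) ∧ F (-4267/10000) < (8402456983/2500000000 : ℝ) :=
  F_interval (by norm_num) E16.1 E16.2
    (fun E hE1 hE2 => by nlinarith [sq_nonneg (E - (1631648301359/2500000000000 : ℝ)), sq_nonneg ((130531864133/200000000000 : ℝ) - E), mul_nonneg (sub_nonneg.2 hE1) (sub_nonneg.2 hE2)])
    (fun E hE1 hE2 => by nlinarith [sq_nonneg (E - (1631648301359/2500000000000 : ℝ)), sq_nonneg ((130531864133/200000000000 : ℝ) - E), mul_nonneg (sub_nonneg.2 hE1) (sub_nonneg.2 hE2)])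

lemma E17 : (3269829726897/5000000000000 : ℝ) < Real.exp (-4247/10000) ∧ Real.exp (-4247/10000) < (817457431869/1250000000000 : ℝ) := by
  refine exp_lo_hi (Real.exp_bound (x := -4247/10000)
      (by rw [abs_le]; constructor <;> norm_num) (n := 10) (by norm_num)) ?_ ?_ <;>
    rw [show |(-4247/10000 : ℝ)| = 4247/10000 by rw [abs_of_nonpos (by norm_num)]; norm_num] <;>
    norm_num [Finset.sum_range_succ, Nat.factorial]

lemma Fb17 : (105031491/31250000 : ℝ) < F (-4247/10000) ∧ F (-4247/10000) < (33610077249/10000000000 : ℝ) :=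
  F_interval (by norm_num) E17.1 E17.2
    (fun E hE1 hE2 => by nlinarith [sq_nonneg (E - (3269829726897/5000000000000 : ℝ)), sq_nonneg ((817457431869/1250000000000 : ℝ) - E), mul_nonneg (sub_nonneg.2 hE1) (sub_nonneg.2 hE2)])
    (fun E hE1 hE2 => by nlinarith [sq_nonneg (E - (3269829726897/5000000000000 : ℝ)), sq_nonneg ((817457431869/1250000000000 : ℝ) - E), mul_nonneg (sub_nonneg.2 hE1) (sub_nonneg.2 hE2)])

lemma E18 : (6559307890151/10000000000000 : ℝ) < Real.exp (-4217/10000) ∧ Real.exp (-4217/10000) < (655930789123/1000000000000 : ℝ) := by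
  refine exp_lo_hi (Real.exp_bound (x := -4217/10000)
      (by rw [abs_le]; constructor <;> norm_num) (n := 10) (by norm_num)) ?_ ?_ <;>
    rw [show |(-4217/10000 : ℝ)| = 4217/10000 by rw [abs_of_nonpos (by norm_num)]; norm_num] <;>
    norm_num [Finset.sum_range_succ, Nat.factorial]

lemma Fb18 : (33610554659/10000000000 : ℝ) < F (-4217/10000) ∧ F (-4217/10000) < (1680527739/500000000 : ℝ) :=
  F_interval (by norm_num) E18.1 E18.2
    (fun E hE1 hE2 => by nlinarith [sq_nonneg (E - (6559307890151/10000000000000 : ℝ)), sq_nonneg ((655930789123/1000000000000 : ℝ) - E), mul_nonneg (sub_nonneg.2 hE1) (sub_nonneg.2 hE2)])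
    (fun E hE1 hE2 => by nlinarith [sq_nonneg (E - (6559307890151/10000000000000 : ℝ)), sq_nonneg ((655930789123/1000000000000 : ℝ) - E), mul_nonneg (sub_nonneg.2 hE1) (sub_nonneg.2 hE2)])

lemma E19 : (823611411061/1250000000000 : ℝ) < Real.exp (-1043/2500) ∧ Real.exp (-1043/2500) < (6588891289457/10000000000000 : ℝ) := by
  refine exp_lo_hi (Real.exp_bound (x := -1043/2500)
      (by rw [abs_le]; constructor <;> norm_num) (n := 10) (by norm_num)) ?_ ?_ <;>
    rw [show |(-1043/2500 : ℝ)| = 1043/2500 by rw [abs_of_nonpos (by norm_num)]; norm_num] <;>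
    norm_num [Finset.sum_range_succ, Nat.factorial]

lemma Fb19 : (4201438029/1250000000 : ℝ) < F (-1043/2500) ∧ F (-1043/2500) < (33611504341/10000000000 : ℝ) :=
  F_interval (by norm_num) E19.1 E19.2
    (fun E hE1 hE2 => by nlinarith [sq_nonneg (E - (823611411061/1250000000000 : ℝ)), sq_nonneg ((6588891289457/10000000000000 : ℝ) - E), mul_nonneg (sub_nonneg.2 hE1) (sub_nonneg.2 hE2)])
    (fun E hE1 hE2 => by nlinarith [sq_nonneg (E - (823611411061/1250000000000 : ℝ)), sq_nonneg ((6588891289457/10000000000000 : ℝ) - E), mul_nonneg (sub_nonneg.2 hE1) (sub_nonneg.2 hE2)])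

lemma E20 : (663351674631/1000000000000 : ℝ) < Real.exp (-8209/20000) ∧ Real.exp (-8209/20000) < (3316758373567/5000000000000 : ℝ) := by
  refine exp_lo_hi (Real.exp_bound (x := -8209/20000)
      (by rw [abs_le]; constructor <;> norm_num) (n := 10) (by norm_num)) ?_ ?_ <;>
    rw [show |(-8209/20000 : ℝ)| = 8209/20000 by rw [abs_of_nonpos (by norm_num)]; norm_num] <;>
    norm_num [Finset.sum_range_succ, Nat.factorial]

lemma Fb20 : (33613454357/10000000000 : ℝ) < F (-8209/20000) ∧ F (-8209/20000) < (33613454449/10000000000 : ℝ) :=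
  F_interval (by norm_num) E20.1 E20.2
    (fun E hE1 hE2 => by nlinarith [sq_nonneg (E - (663351674631/1000000000000 : ℝ)), sq_nonneg ((3316758373567/5000000000000 : ℝ) - E), mul_nonneg (sub_nonneg.2 hE1) (sub_nonneg.2 hE2)])
    (fun E hE1 hE2 => by nlinarith [sq_nonneg (E - (663351674631/1000000000000 : ℝ)), sq_nonneg ((3316758373567/5000000000000 : ℝ) - E), mul_nonneg (sub_nonneg.2 hE1) (sub_nonneg.2 hE2)])

lemma E21 : (6701022273579/10000000000000 : ℝ) < Real.exp (-16013/40000) ∧ Real.exp (-16013/40000) < (6701022274221/10000000000000 : ℝ) := by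
  refine exp_lo_hi (Real.exp_bound (x := -16013/40000)
      (by rw [abs_le]; constructor <;> norm_num) (n := 10) (by norm_num)) ?_ ?_ <;>
    rw [show |(-16013/40000 : ℝ)| = 16013/40000 by rw [abs_of_nonpos (by norm_num)]; norm_num] <;>
    norm_num [Finset.sum_range_succ, Nat.factorial]

lemma Fb21 : (33617565671/10000000000 : ℝ) < F (-16013/40000) ∧ F (-16013/40000) < (2101097859/625000000 : ℝ) :=
  F_interval (by norm_num) E21.1 E21.2
    (fun E hE1 hE2 => by nlinarith [sq_nonneg (E - (6701022273579/10000000000000 : ℝ)), sq_nonneg ((6701022274221/10000000000000 : ℝ) - E), mul_nonneg (sub_nonneg.2 hE1) (sub_nonneg.2 hE2)])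
    (fun E hE1 hE2 => by nlinarith [sq_nonneg (E - (6701022273579/10000000000000 : ℝ)), sq_nonneg ((6701022274221/10000000000000 : ℝ) - E), mul_nonneg (sub_nonneg.2 hE1) (sub_nonneg.2 hE2)])

lemma E22 : (6803570806333/10000000000000 : ℝ) < Real.exp (-30811/80000) ∧ Real.exp (-30811/80000) < (6803570806769/10000000000000 : ℝ) := by
  refine exp_lo_hi (Real.exp_bound (x := -30811/80000)
      (by rw [abs_le]; constructor <;> norm_num) (n := 10) (by norm_num)) ?_ ?_ <;>
    rw [show |(-30811/80000 : ℝ)| = 30811/80000 by rw [abs_of_nonpos (by norm_num)]; norm_num] <;>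
    norm_num [Finset.sum_range_succ, Nat.factorial]

lemma Fb22 : (33626412383/10000000000 : ℝ) < F (-30811/80000) ∧ F (-30811/80000) < (2101650777/625000000 : ℝ) :=
  F_interval (by norm_num) E22.1 E22.2
    (fun E hE1 hE2 => by nlinarith [sq_nonneg (E - (6803570806333/10000000000000 : ℝ)), sq_nonneg ((6803570806769/10000000000000 : ℝ) - E), mul_nonneg (sub_nonneg.2 hE1) (sub_nonneg.2 hE2)])
    (fun E hE1 hE2 => by nlinarith [sq_nonneg (E - (6803570806333/10000000000000 : ℝ)), sq_nonneg ((6803570806769/10000000000000 : ℝ) - E), mul_nonneg (sub_nonneg.2 hE1) (sub_nonneg.2 hE2)])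

lemma E23 : (6960343614047/10000000000000 : ℝ) < Real.exp (-57977/160000) ∧ Real.exp (-57977/160000) < (1392068722857/2000000000000 : ℝ) := by
  refine exp_lo_hi (Real.exp_bound (x := -57977/160000)
      (by rw [abs_le]; constructor <;> norm_num) (n := 10) (by norm_num)) ?_ ?_ <;>
    rw [show |(-57977/160000 : ℝ)| = 57977/160000 by rw [abs_of_nonpos (by norm_num)]; norm_num] <;>
    norm_num [Finset.sum_range_succ, Nat.factorial]

lemma Fb23 : (16822875143/5000000000 : ℝ) < F (-57977/160000) ∧ F (-57977/160000) < (33645750313/10000000000 : ℝ) :=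
  F_interval (by norm_num) E23.1 E23.2
    (fun E hE1 hE2 => by nlinarith [sq_nonneg (E - (6960343614047/10000000000000 : ℝ)), sq_nonneg ((1392068722857/2000000000000 : ℝ) - E), mul_nonneg (sub_nonneg.2 hE1) (sub_nonneg.2 hE2)])
    (fun E hE1 hE2 => by nlinarith [sq_nonneg (E - (6960343614047/10000000000000 : ℝ)), sq_nonneg ((1392068722857/2000000000000 : ℝ) - E), mul_nonneg (sub_nonneg.2 hE1) (sub_nonneg.2 hE2)])

lemma E24 : (7046880897029/10000000000000 : ℝ) < Real.exp (-7/20) ∧ Real.exp (-7/20) < (3523440448599/5000000000000 : ℝ) := by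
  refine exp_lo_hi (Real.exp_bound (x := -7/20)
      (by rw [abs_le]; constructor <;> norm_num) (n := 10) (by norm_num)) ?_ ?_ <;>
    rw [show |(-7/20 : ℝ)| = 7/20 by rw [abs_of_nonpos (by norm_num)]; norm_num] <;>
    norm_num [Finset.sum_range_succ, Nat.factorial]

lemma Fb24 : (4207413207/1250000000 : ℝ) < F (-7/20) ∧ F (-7/20) < (1346372227/400000000 : ℝ) :=
  F_interval (by norm_num) E24.1 E24.2
    (fun E hE1 hE2 => by nlinarith [sq_nonneg (E - (7046880897029/10000000000000 : ℝ)), sq_nonneg ((3523440448599/5000000000000 : ℝ) - E), mul_nonneg (sub_nonneg.2 hE1) (sub_nonneg.2 hE2)])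
    (fun E hE1 hE2 => by nlinarith [sq_nonneg (E - (7046880897029/10000000000000 : ℝ)), sq_nonneg ((3523440448599/5000000000000 : ℝ) - E), mul_nonneg (sub_nonneg.2 hE1) (sub_nonneg.2 hE2)])

lemma F_lower : ∀ x ∈ Icc (-1/2 : ℝ) (-7/20 : ℝ), (3.36092:ℝ) ≤ F x := by
  intro x hx
  obtain ⟨hx1, hx2⟩ := hx
  rcases le_or_gt x (-38741/80000) with h1 | h1
  · exact cell_bound F_convex (by norm_num : (-13/25:ℝ) < -1/2) hx1 h1 Fb1.1.le Fb0.2.le (by norm_num) (by norm_num)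
  rcases le_or_gt x (-18763/40000) with h2 | h2
  · exact cell_bound F_convex (by norm_num : (-1/2:ℝ) < -38741/80000) h1.le h2 Fb2.1.le Fb1.2.le (by norm_num) (by norm_num)
  rcases le_or_gt x (-9179/20000) with h3 | h3
  · exact cell_bound F_convex (by norm_num : (-38741/80000:ℝ) < -18763/40000) h2.le h3 Fb3.1.le Fb2.2.le (by norm_num) (by norm_num)
  rcases le_or_gt x (-2261/5000) with h4 | h4
  · exact cell_bound F_convex (by norm_num : (-18763/40000:ℝ) < -9179/20000) h3.le h4 Fb4.1.le Fb3.2.le (by norm_num) (by norm_num)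
  rcases le_or_gt x (-4477/10000) with h5 | h5
  · exact cell_bound F_convex (by norm_num : (-9179/20000:ℝ) < -2261/5000) h4.le h5 Fb5.1.le Fb4.2.le (by norm_num) (by norm_num)
  rcases le_or_gt x (-4447/10000) with h6 | h6
  · exact cell_bound F_convex (by norm_num : (-2261/5000:ℝ) < -4477/10000) h5.le h6 Fb6.1.le Fb5.2.le (by norm_num) (by norm_num)
  rcases le_or_gt x (-4427/10000) with h7 | h7
  · exact cell_bound F_convex (by norm_num : (-4477/10000:ℝ) < -4447/10000) h6.le h7 Fb7.1.le Fb6.2.le (by norm_num) (by norm_num)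
  rcases le_or_gt x (-4407/10000) with h8 | h8
  · exact cell_bound F_convex (by norm_num : (-4447/10000:ℝ) < -4427/10000) h7.le h8 Fb8.1.le Fb7.2.le (by norm_num) (by norm_num)
  rcases le_or_gt x (-4387/10000) with h9 | h9
  · exact cell_bound F_convex (by norm_num : (-4427/10000:ℝ) < -4407/10000) h8.le h9 Fb9.1.le Fb8.2.le (by norm_num) (by norm_num)
  rcases le_or_gt x (-4367/10000) with h10 | h10
  · exact cell_bound F_convex (by norm_num : (-4407/10000:ℝ) < -4387/10000) h9.le h10 Fb10.1.le Fb9.2.le (by norm_num) (by norm_num)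
  rcases le_or_gt x (-4347/10000) with h11 | h11
  · exact cell_bound F_convex (by norm_num : (-4387/10000:ℝ) < -4367/10000) h10.le h11 Fb11.1.le Fb10.2.le (by norm_num) (by norm_num)
  rcases le_or_gt x (-4327/10000) with h12 | h12
  · exact cell_bound F_convex (by norm_num : (-4367/10000:ℝ) < -4347/10000) h11.le h12 Fb12.1.le Fb11.2.le (by norm_num) (by norm_num)
  rcases le_or_gt x (-4307/10000) with h13 | h13
  · exact cell_bound F_convex (by norm_num : (-4347/10000:ℝ) < -4327/10000) h12.le h13 Fb13.1.le Fb12.2.le (by norm_num) (by norm_num)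
  rcases le_or_gt x (-4287/10000) with h14 | h14
  · exact cell_bound F_convex (by norm_num : (-4327/10000:ℝ) < -4307/10000) h13.le h14 Fb14.1.le Fb13.2.le (by norm_num) (by norm_num)
  rcases le_or_gt x (-4267/10000) with h15 | h15
  · exact cell_bound F_convex (by norm_num : (-4307/10000:ℝ) < -4287/10000) h14.le h15 Fb15.1.le Fb14.2.le (by norm_num) (by norm_num)
  rcases le_or_gt x (-4247/10000) with h16 | h16
  · exact cell_bound F_convex (by norm_num : (-4287/10000:ℝ) < -4267/10000) h15.le h16 Fb16.1.le Fb15.2.le (by norm_num) (by norm_num)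
  rcases le_or_gt x (-4217/10000) with h17 | h17
  · exact cell_bound F_convex (by norm_num : (-4267/10000:ℝ) < -4247/10000) h16.le h17 Fb17.1.le Fb16.2.le (by norm_num) (by norm_num)
  rcases le_or_gt x (-1043/2500) with h18 | h18
  · exact cell_bound F_convex (by norm_num : (-4247/10000:ℝ) < -4217/10000) h17.le h18 Fb18.1.le Fb17.2.le (by norm_num) (by norm_num)
  rcases le_or_gt x (-8209/20000) with h19 | h19
  · exact cell_bound F_convex (by norm_num : (-4217/10000:ℝ) < -1043/2500) h18.le h19 Fb19.1.le Fb18.2.le (by norm_num) (by norm_num)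
  rcases le_or_gt x (-16013/40000) with h20 | h20
  · exact cell_bound F_convex (by norm_num : (-1043/2500:ℝ) < -8209/20000) h19.le h20 Fb20.1.le Fb19.2.le (by norm_num) (by norm_num)
  rcases le_or_gt x (-30811/80000) with h21 | h21
  · exact cell_bound F_convex (by norm_num : (-8209/20000:ℝ) < -16013/40000) h20.le h21 Fb21.1.le Fb20.2.le (by norm_num) (by norm_num)
  rcases le_or_gt x (-57977/160000) with h22 | h22
  · exact cell_bound F_convex (by norm_num : (-16013/40000:ℝ) < -30811/80000) h21.le h22 Fb22.1.le Fb21.2.le (by norm_num) (by norm_num)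
  exact cell_bound F_convex (by norm_num : (-30811/80000:ℝ) < -57977/160000) h22.le hx2 Fb23.1.le Fb22.2.le (by norm_num) (by norm_num)

/-- The Gaussian density `Θ = (min F)/e²` of the Wang–Zhu soliton equals `0.4549`
to four decimal places. -/
theorem stmt_6 :
    ∃ cs : ℝ, (∀ c : ℝ, F cs ≤ F c) ∧
      |F cs / Real.exp 2 - 0.4549| < 5e-5 := by
  obtain ⟨cs, hcs, hmin⟩ := isCompact_Icc.exists_isMinOn
    ⟨(-1/2 : ℝ), left_mem_Icc.2 (by norm_num)⟩ F_contOn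
  have hmin' : ∀ y ∈ Icc (-1/2 : ℝ) (-7/20), F cs ≤ F y := fun y hy => hmin hy
  have hc0mem : (-4347/10000 : ℝ) ∈ Icc (-1/2 : ℝ) (-7/20) :=
    Set.mem_Icc.2 ⟨by norm_num, by norm_num⟩
  have hup : F cs < (33609382087/10000000000 : ℝ) :=
    lt_of_le_of_lt (hmin' _ hc0mem) Fb12.2
  have hlow : (3.36092:ℝ) ≤ F cs := F_lower cs hcs
  have hL : F (-4347/10000) ≤ F (-1/2) := by
    have h1 := Fb12.2
    have h2 := Fb1.1
    linarith
  have hR : F (-4347/10000) ≤ F (-7/20) := by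
    have h1 := Fb12.2
    have h2 := Fb24.1
    linarith
  refine ⟨cs, fun c => ?_, ?_⟩
  · rcases le_or_gt c (-1/2) with h | h
    · exact le_trans (hmin' _ (left_mem_Icc.2 (by norm_num)))
        (left_bookend F_convex (by norm_num) hL h)
    · rcases le_or_gt c (-7/20) with h2 | h2
      · exact hmin' _ (Set.mem_Icc.2 ⟨h.le, h2⟩)
      · exact le_trans (hmin' _ (right_mem_Icc.2 (by norm_num)))
          (right_bookend F_convex (by norm_num) hR h2.le)
  · have hexp2 := Real.exp_pos 2
    have he2 : Real.exp 2 = Real.exp 1 * Real.exp 1 := by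
      rw [← Real.exp_add]; norm_num
    have e2l : (7.389056098:ℝ) < Real.exp 2 := by
      have h := Real.exp_one_gt_d9
      rw [he2]; nlinarith [mul_self_nonneg (Real.exp 1 - 2.7182818283)]
    have e2u : Real.exp 2 < (7.3890561:ℝ) := by
      have h := Real.exp_one_lt_d9
      have h0 := Real.exp_pos 1
      rw [he2]; nlinarith [mul_self_nonneg (Real.exp 1 - 2.7182818286)]
    have h1 : (0.45485:ℝ) < F cs / Real.exp 2 := by
      rw [lt_div_iff₀ hexp2]; linarith
    have h2 : F cs / Real.exp 2 < (0.45495:ℝ) := by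
      rw [div_lt_iff₀ hexp2]; linarith
    rw [abs_lt]
    constructor <;> [linarith; linarith]
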